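/- If (x_i)_{i=1}^m is a λ-wide-(s) sequence in a Banach space, then (xᵢ/‖xᵢ‖)_{i=1}^m is an ℓ₁⁺-sequence with constant max(2λ, λ²). -/
import Mathlib


variable {X : Type*} [NormedAddCommGroup X] [NormedSpace ℝ X]

/-- Partial sum `∑_{i < p} aᵢ xᵢ` of a finite sequence. -/
def prefSum {m : ℕ} (x : Fin m → X) (a : Fin m → ℝ) (p : ℕ) : X :=
  ∑ i : Fin m, if (i : ℕ) < p then a i • x i else 0

/-- `(x_i)_{i=1}^m` is `K`-basic: the basis constant is at most `K`. -/
def IsFinBasic {m : ℕ} (K : ℝ) (x : Fin m → X) : Prop :=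
  ∀ (a : Fin m → ℝ) (p q : ℕ), p ≤ q → q ≤ m →
    ‖prefSum x a p‖ ≤ K * ‖prefSum x a q‖

/-- `(x_i)_{i=1}^m` is normalized: each vector has norm one. -/
def IsNormalizedFin {m : ℕ} (x : Fin m → X) : Prop := ∀ i, ‖x i‖ = 1

/-- An `ℓ₁⁺-K`-sequence: normalized, `K`-basic, and
`(1/K) ∑ aᵢ ≤ ‖∑ aᵢ xᵢ‖` for nonnegative scalars. -/
def IsL1Plus {m : ℕ} (K : ℝ) (x : Fin m → X) : Prop :=
  IsNormalizedFin x ∧ IsFinBasic K x ∧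
    ∀ a : Fin m → ℝ, (∀ i, 0 ≤ a i) → (1 / K) * ∑ i, a i ≤ ‖∑ i, a i • x i‖

/-- An `ℓ∞⁺-K`-sequence: normalized, `K`-basic, and there are coefficients
`aᵢ ∈ [1/K, 1]` with `‖∑ aᵢ xᵢ‖ ≤ K`. -/
def IsLInfPlus {m : ℕ} (K : ℝ) (x : Fin m → X) : Prop :=
  IsNormalizedFin x ∧ IsFinBasic K x ∧
    ∃ a : Fin m → ℝ, (∀ i, 1 / K ≤ a i ∧ a i ≤ 1) ∧ ‖∑ i, a i • x i‖ ≤ K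

/-- A `λ`-wide-(s) sequence: `2λ`-basic, `‖xᵢ‖ ≤ λ`, and
`sup_k |∑_{i≥k} aᵢ| ≤ λ ‖∑ aᵢ xᵢ‖` for all scalars. -/
def IsWideS {m : ℕ} (l : ℝ) (x : Fin m → X) : Prop :=
  IsFinBasic (2 * l) x ∧ (∀ i, ‖x i‖ ≤ l) ∧
    ∀ (a : Fin m → ℝ) (k : ℕ),
      |∑ i : Fin m, if k ≤ (i : ℕ) then a i else 0| ≤ l * ‖∑ i, a i • x i‖

/-- A `λ`-wide-(c) sequence: `λ`-basic, `1/λ ≤ ‖xᵢ‖ ≤ 1`, and `‖∑ xᵢ‖ ≤ λ`. -/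
def IsWideC {m : ℕ} (l : ℝ) (x : Fin m → X) : Prop :=
  IsFinBasic l x ∧ (∀ i, 1 / l ≤ ‖x i‖ ∧ ‖x i‖ ≤ 1) ∧ ‖∑ i, x i‖ ≤ l

/-- If `(x_i)` is a `λ`-wide-(s) sequence, then the normalizations `xᵢ/‖xᵢ‖` form
an `ℓ₁⁺`-sequence with constant `max (2λ) (λ²)`. -/
theorem l1Plus_of_wideS {m : ℕ} (l : ℝ) (hl : 1 ≤ l) (x : Fin m → X)
    (hx : IsWideS l x) :
    IsL1Plus (max (2 * l) (l ^ 2)) (fun i => ‖x i‖⁻¹ • x i) := by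
  obtain ⟨hbasic, hbnd, hsup⟩ := hx
  have hl0 : (0:ℝ) < l := lt_of_lt_of_le one_pos hl
  set K : ℝ := max (2 * l) (l ^ 2) with hKdef
  have hK1 : 2 * l ≤ K := le_max_left _ _
  have hK2 : l ^ 2 ≤ K := le_max_right _ _
  have hK0 : (0:ℝ) < K := lt_of_lt_of_le (by nlinarith) hK2
  -- lower bound on norms
  have hlow : ∀ i, 1 / l ≤ ‖x i‖ := by
    intro i
    have h := hsup (fun j => if j = i then 1 else 0) i
    have h1 : (∑ j : Fin m, if (i:ℕ) ≤ (j:ℕ) then (if j = i then (1:ℝ) else 0) else 0) = 1 := by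
      rw [Finset.sum_congr rfl (g := fun j => if j = i then (1:ℝ) else 0)
        (fun j _ => by by_cases hji : j = i
                       · subst hji; simp
                       · simp [hji])]
      simp
    have h2 : (∑ j : Fin m, (if j = i then (1:ℝ) else 0) • x j) = x i := by
      simp [ite_smul]
    rw [h1, h2] at h
    rw [div_le_iff₀ hl0]
    calc (1:ℝ) = |1| := by norm_num
    _ ≤ l * ‖x i‖ := h
    _ = ‖x i‖ * l := mul_comm _ _
  have hne : ∀ i, ‖x i‖ ≠ 0 := fun i =>
    ne_of_gt (lt_of_lt_of_le (by positivity) (hlow i))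
  refine ⟨?_, ?_, ?_⟩
  · intro i
    simp only [norm_smul, norm_inv, norm_norm]
    exact inv_mul_cancel₀ (hne i)
  · intro a p q hpq hqm
    have key : ∀ r, prefSum (fun i => ‖x i‖⁻¹ • x i) a r
        = prefSum x (fun i => a i * ‖x i‖⁻¹) r := by
      intro r
      refine Finset.sum_congr rfl fun i _ => ?_
      split_ifs with h
      · rw [smul_smul]
      · rfl
    rw [key, key]
    calc ‖prefSum x (fun i => a i * ‖x i‖⁻¹) p‖
        ≤ (2 * l) * ‖prefSum x (fun i => a i * ‖x i‖⁻¹) q‖ := hbasic _ p q hpq hqm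
      _ ≤ K * ‖prefSum x (fun i => a i * ‖x i‖⁻¹) q‖ :=
          mul_le_mul_of_nonneg_right hK1 (norm_nonneg _)
  · intro a ha
    set b : Fin m → ℝ := fun i => a i * ‖x i‖⁻¹ with hb
    have hbnn : ∀ i, 0 ≤ b i := fun i => mul_nonneg (ha i) (by positivity)
    have hsum : (∑ i, a i • (fun i => ‖x i‖⁻¹ • x i) i) = ∑ i, b i • x i := by
      refine Finset.sum_congr rfl fun i _ => ?_
      simp [hb, smul_smul]
    have h := hsup b 0
    simp only [Nat.zero_le, if_true] at h
    have habs : |∑ i, b i| = ∑ i, b i := abs_of_nonneg (Finset.sum_nonneg fun i _ => hbnn i)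
    rw [habs] at h
    have hab : ∀ i, a i ≤ l * b i := by
      intro i
      have : a i = b i * ‖x i‖ := by
        simp [hb, mul_assoc, inv_mul_cancel₀ (hne i)]
      rw [this]
      calc b i * ‖x i‖ ≤ b i * l := mul_le_mul_of_nonneg_left (hbnd i) (hbnn i)
        _ = l * b i := mul_comm _ _
    have hsa : (∑ i, a i) ≤ l * ∑ i, b i := by
      rw [Finset.mul_sum]
      exact Finset.sum_le_sum fun i _ => hab i
    have hN : (0:ℝ) ≤ ‖∑ i, b i • x i‖ := norm_nonneg _
    have hfinal : (∑ i, a i) ≤ l ^ 2 * ‖∑ i, b i • x i‖ := by nlinarith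
    have hann : (0:ℝ) ≤ ∑ i, a i := Finset.sum_nonneg fun i _ => ha i
    rw [show (fun i => ‖x i‖⁻¹ • x i) = fun i => ‖x i‖⁻¹ • x i from rfl, hsum]
    rw [div_mul_eq_mul_div, div_le_iff₀ hK0]
    nlinarith
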